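/- If F : ℝ^n → ℝ is convex and differentiable on an open convex domain and G(y) = ⟨∇F*(y), z⟩ where F* is the convex conjugate satisfying ∇F* = (∇F)^{-1} on the relevant set, and if x ↦ ⟨∇F(x), z⟩ is concave and the map W(x) = ⟨∇F(x), z⟩ satisfies W(x₁) ≤ W(x₂) iff x₁ ≤ x₂ (componentwise), then G(y) = ⟨∇F*(y), z⟩ is convex in y and monotone: y₁ ≤ y₂ implies G(y₁) ≤ G(y₂). -/
import Mathlib


/-- If `gF` (the gradient of a Legendre `F`) has `gFs` (the gradient of the conjugate)
as its inverse, `x ↦ ⟨gF x, z⟩` is concave and monotone in the componentwise order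
(as an iff), then `y ↦ ⟨gFs y, z⟩` is convex and monotone. -/
theorem conjugate_gradient_convex_monotone (n : ℕ) (z : Fin n → ℝ)
    (hz : ∀ i, 0 < z i)
    (gF gFs : (Fin n → ℝ) → (Fin n → ℝ))
    (hinv₁ : ∀ x, gFs (gF x) = x)
    (hinv₂ : ∀ y, gF (gFs y) = y)
    (hconc : ConcaveOn ℝ Set.univ (fun x => ∑ i, gF x i * z i))
    (hmono : ∀ x₁ x₂, (∑ i, gF x₁ i * z i) ≤ (∑ i, gF x₂ i * z i) ↔ x₁ ≤ x₂) :
    ConvexOn ℝ Set.univ (fun y => ∑ i, gFs y i * z i) ∧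
    ∀ y₁ y₂, y₁ ≤ y₂ → (∑ i, gFs y₁ i * z i) ≤ (∑ i, gFs y₂ i * z i) := by
  constructor
  · refine ⟨convex_univ, fun y₁ _ y₂ _ a b ha hb hab => ?_⟩
    set x := gFs (a • y₁ + b • y₂) with hx
    set x₁ := gFs y₁ with hx₁
    set x₂ := gFs y₂ with hx₂
    have h1 := hconc.2 (Set.mem_univ x₁) (Set.mem_univ x₂) ha hb hab
    simp only [smul_eq_mul] at h1
    have key : (∑ i, gF x i * z i) ≤ ∑ i, gF (a • x₁ + b • x₂) i * z i := by
      calc ∑ i, gF x i * z i = ∑ i, (a • y₁ + b • y₂) i * z i := by rw [hx, hinv₂]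
        _ = a * (∑ i, gF x₁ i * z i) + b * (∑ i, gF x₂ i * z i) := by
            rw [hx₁, hx₂, hinv₂, hinv₂]
            simp only [Pi.add_apply, Pi.smul_apply, smul_eq_mul, add_mul,
              Finset.sum_add_distrib, Finset.mul_sum, mul_assoc]
        _ ≤ _ := h1
    have hle := (hmono x (a • x₁ + b • x₂)).mp key
    calc ∑ i, gFs (a • y₁ + b • y₂) i * z i
        ≤ ∑ i, (a • x₁ + b • x₂) i * z i :=
          Finset.sum_le_sum fun i _ => mul_le_mul_of_nonneg_right (hle i) (hz i).le
      _ = a • ∑ i, gFs y₁ i * z i + b • ∑ i, gFs y₂ i * z i := by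
          simp only [Pi.add_apply, Pi.smul_apply, smul_eq_mul, add_mul,
            Finset.sum_add_distrib, Finset.mul_sum, mul_assoc, hx₁, hx₂]
  · intro y₁ y₂ h
    have hW : (∑ i, gF (gFs y₁) i * z i) ≤ ∑ i, gF (gFs y₂) i * z i := by
      simp only [hinv₂]
      exact Finset.sum_le_sum fun i _ => mul_le_mul_of_nonneg_right (h i) (hz i).le
    exact Finset.sum_le_sum fun i _ =>
      mul_le_mul_of_nonneg_right ((hmono _ _).mp hW i) (hz i).le
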